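/- Let N ≥ 3 be a fixed integer and m an integer with 1 ≤ m < N/2. For each ε ∈ (0,1/3] let Y^{(ε)} = (Y^{(ε)}_k, k ∈ ℤ) be a strictly stationary Markov chain satisfying Condition S(N,ε). Then P(Y^{(ε)}_{-m} = Y^{(ε)}_m = N−m) ~ ε^{2N−1} as ε → 0+. -/

import Mathlib

open MeasureTheory ProbabilityTheory Filter Set
open scoped ENNReal Topology

noncomputable section

variable {Ω : Type*}

/-- The σ-field generated by the random variables `X k`, `k ∈ S`. -/
def sigmaOf [MeasurableSpace Ω] (X : ℤ → Ω → ℝ) (S : Set ℤ) : MeasurableSpace Ω :=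
  ⨆ k ∈ S, MeasurableSpace.comap (X k) inferInstance

/-- A sequence indexed by `ℤ` is strictly stationary if its law (as a measure on `ℤ → ℝ`)
is invariant under the index shift. -/
def StrictlyStationary [MeasurableSpace Ω] (P : Measure Ω) (X : ℤ → Ω → ℝ) : Prop :=
  ∀ n : ℤ, Measure.map (fun ω => fun k : ℤ => X (k + n) ω) P
    = Measure.map (fun ω => fun k : ℤ => X k ω) P

/-- Markov chain: for each `k`, the past `σ(X_j, j ≤ k)` and the future `σ(X_j, j ≥ k)`
are conditionally independent given the present `σ(X_k)`. -/
def IsMarkovChain [MeasurableSpace Ω] (P : Measure Ω) (X : ℤ → Ω → ℝ) : Prop :=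
  (∀ k, Measurable (X k)) ∧
  ∀ k : ℤ, ∀ A B : Set Ω, MeasurableSet[sigmaOf X (Set.Iic k)] A →
    MeasurableSet[sigmaOf X (Set.Ici k)] B →
    (fun ω => (P[A.indicator (fun _ => (1:ℝ)) | sigmaOf X {k}]) ω *
              (P[B.indicator (fun _ => (1:ℝ)) | sigmaOf X {k}]) ω)
      =ᵐ[P] P[(A ∩ B).indicator (fun _ => (1:ℝ)) | sigmaOf X {k}]

/-- Covariance of two real random variables. -/
def covP [MeasurableSpace Ω] (P : Measure Ω) (f g : Ω → ℝ) : ℝ :=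
  ∫ ω, (f ω - ∫ x, f x ∂P) * (g ω - ∫ x, g x ∂P) ∂P

/-- Correlation coefficient of two real random variables (with the convention 0/0 = 0). -/
def corrP [MeasurableSpace Ω] (P : Measure Ω) (f g : Ω → ℝ) : ℝ :=
  covP P f g / (Real.sqrt (covP P f f) * Real.sqrt (covP P g g))

/-- Maximal correlation coefficient ρ(𝒜,ℬ): the supremum of |Corr(f,g)| over square-integrable
`f` measurable w.r.t. `mA` and `g` measurable w.r.t. `mB`. -/
def maxCorr (mA mB : MeasurableSpace Ω) [MeasurableSpace Ω] (P : Measure Ω) : ℝ :=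
  sSup {r : ℝ | ∃ f g : Ω → ℝ, Measurable[mA] f ∧ Measurable[mB] g ∧
    MemLp f 2 P ∧ MemLp g 2 P ∧ r = |corrP P f g|}

/-- η(A,B) = P(A∩B)/(P(A)P(B)) (with the convention 0/0 = 0). -/
def etaP [MeasurableSpace Ω] (P : Measure Ω) (A B : Set Ω) : ℝ :=
  (P (A ∩ B)).toReal / ((P A).toReal * (P B).toReal)

/-- ψ dependence coefficient, with values in `[0,∞]`. -/
def psiDep (mA mB : MeasurableSpace Ω) [MeasurableSpace Ω] (P : Measure Ω) : ℝ≥0∞ :=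
  ⨆ (A : Set Ω) (B : Set Ω) (_ : MeasurableSet[mA] A) (_ : MeasurableSet[mB] B)
    (_ : 0 < P A) (_ : 0 < P B), ENNReal.ofReal |etaP P A B - 1|

/-- A finite partition of `Ω` into `m`-measurable events of positive probability. -/
def IsFinPartition (m : MeasurableSpace Ω) [MeasurableSpace Ω] (P : Measure Ω)
    {n : ℕ} (A : Fin n → Set Ω) : Prop :=
  (∀ i, MeasurableSet[m] (A i)) ∧ (∀ i, 0 < P (A i)) ∧
  (Pairwise fun i j => Disjoint (A i) (A j)) ∧ (⋃ i, A i) = Set.univ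

/-- Coefficient of information I(𝒜,ℬ), valued in `[0,∞]`
(note `Real.log 0 = 0`, so `0 log 0 = 0` automatically). -/
def infoCoef (mA mB : MeasurableSpace Ω) [MeasurableSpace Ω] (P : Measure Ω) : ℝ≥0∞ :=
  ⨆ (nI : ℕ) (nJ : ℕ) (A : Fin nI → Set Ω) (B : Fin nJ → Set Ω)
    (_ : IsFinPartition mA P A) (_ : IsFinPartition mB P B),
    ENNReal.ofReal (∑ i, ∑ j,
      (P (A i)).toReal * (P (B j)).toReal *
        (etaP P (A i) (B j) * Real.log (etaP P (A i) (B j))))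

/-- β dependence coefficient (absolute regularity coefficient). -/
def betaDep (mA mB : MeasurableSpace Ω) [MeasurableSpace Ω] (P : Measure Ω) : ℝ :=
  sSup {r : ℝ | ∃ (nI nJ : ℕ) (A : Fin nI → Set Ω) (B : Fin nJ → Set Ω),
    IsFinPartition mA P A ∧ IsFinPartition mB P B ∧
    r = (1/2) * ∑ i, ∑ j,
      |(P (A i ∩ B j)).toReal - (P (A i)).toReal * (P (B j)).toReal|}

/-- ρ(X,n) -/
def rhoMix [MeasurableSpace Ω] (P : Measure Ω) (X : ℤ → Ω → ℝ) (n : ℕ) : ℝ :=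
  maxCorr (sigmaOf X (Set.Iic 0)) (sigmaOf X (Set.Ici (n:ℤ))) P

/-- β(X,n) -/
def betaMix [MeasurableSpace Ω] (P : Measure Ω) (X : ℤ → Ω → ℝ) (n : ℕ) : ℝ :=
  betaDep (sigmaOf X (Set.Iic 0)) (sigmaOf X (Set.Ici (n:ℤ))) P

/-- I(X,n) -/
def infoMix [MeasurableSpace Ω] (P : Measure Ω) (X : ℤ → Ω → ℝ) (n : ℕ) : ℝ≥0∞ :=
  infoCoef (sigmaOf X (Set.Iic 0)) (sigmaOf X (Set.Ici (n:ℤ))) P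

/-- ψ(X,n) -/
def psiMix [MeasurableSpace Ω] (P : Measure Ω) (X : ℤ → Ω → ℝ) (n : ℕ) : ℝ≥0∞ :=
  psiDep (sigmaOf X (Set.Iic 0)) (sigmaOf X (Set.Ici (n:ℤ))) P

/-- Interlaced maximal correlation coefficient ρ*(X,n): the supremum of
ρ(σ(X_k, k ∈ S), σ(X_k, k ∈ T)) over nonempty disjoint S, T ⊂ ℤ with dist(S,T) ≥ n. -/
def rhoStar [MeasurableSpace Ω] (P : Measure Ω) (X : ℤ → Ω → ℝ) (n : ℕ) : ℝ :=
  sSup {r : ℝ | ∃ S T : Set ℤ, S.Nonempty ∧ T.Nonempty ∧ Disjoint S T ∧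
    (∀ s ∈ S, ∀ t ∈ T, (n:ℤ) ≤ |s - t|) ∧ r = maxCorr (sigmaOf X S) (sigmaOf X T) P}

/-- Condition S(N,ε) of Definition 2.1: a strictly stationary Markov chain with state space
`{0,1,...,N}` (as reals) whose joint law of `(Y_0, Y_1)` is as prescribed. -/
def ConditionS [MeasurableSpace Ω] (P : Measure Ω) (N : ℕ) (ε : ℝ) (Y : ℤ → Ω → ℝ) : Prop :=
  StrictlyStationary P Y ∧ IsMarkovChain P Y ∧
  (∀ᵐ ω ∂P, ∃ i : ℕ, i ≤ N ∧ Y 0 ω = (i:ℝ)) ∧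
  (P {ω | Y 0 ω = 0 ∧ Y 1 ω = 0}).toReal
      = 1 - 2 * (ε^(2*N-1) + ∑ u ∈ Finset.Icc 1 (N-1), ε^(2*u)) ∧
  (∀ m : ℕ, 1 ≤ m → m ≤ N - 1 →
    (P {ω | Y 0 ω = (m:ℝ) - 1 ∧ Y 1 ω = (m:ℝ)}).toReal = ε^(2*m) ∧
    (P {ω | Y 0 ω = (m:ℝ) ∧ Y 1 ω = (m:ℝ) - 1}).toReal = ε^(2*m)) ∧
  (P {ω | Y 0 ω = (N:ℝ) - 1 ∧ Y 1 ω = (N:ℝ)}).toReal = ε^(2*N-1) ∧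
  (P {ω | Y 0 ω = (N:ℝ) ∧ Y 1 ω = (N:ℝ) - 1}).toReal = ε^(2*N-1) ∧
  (∀ i j : ℕ, i ≤ N → j ≤ N → ((i = j ∧ 1 ≤ i) ∨ 2 ≤ |(i:ℤ) - (j:ℤ)|) →
    P {ω | Y 0 ω = (i:ℝ) ∧ Y 1 ω = (j:ℝ)} = 0)

/-- `m`-step transition probability `P(Y_m = j | Y_0 = i)` (with the convention 0/0 = 0). -/
def transProb [MeasurableSpace Ω] (P : Measure Ω) (Y : ℤ → Ω → ℝ) (m : ℕ) (i j : ℕ) : ℝ :=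
  (P {ω | Y 0 ω = (i:ℝ) ∧ Y (m:ℤ) ω = (j:ℝ)}).toReal / (P {ω | Y 0 ω = (i:ℝ)}).toReal


lemma sigmaOf_singleton [MeasurableSpace Ω] (X : ℤ → Ω → ℝ) (k : ℤ) :
    sigmaOf X ({k} : Set ℤ) = MeasurableSpace.comap (X k) inferInstance := by
  simp [sigmaOf]

lemma sigmaOf_le [MeasurableSpace Ω] {X : ℤ → Ω → ℝ} (hX : ∀ k, Measurable (X k)) (S : Set ℤ) :
    sigmaOf X S ≤ ‹MeasurableSpace Ω› :=
  iSup₂_le fun k _ => (hX k).comap_le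

lemma mono_ms {m1 m2 : MeasurableSpace Ω} (h : m1 ≤ m2) {s : Set Ω}
    (hs : MeasurableSet[m1] s) : MeasurableSet[m2] s := h s hs

lemma measurableSet_sigmaOf [MeasurableSpace Ω] {X : ℤ → Ω → ℝ} {S : Set ℤ} {k : ℤ}
    (hk : k ∈ S) {s : Set ℝ} (hs : MeasurableSet s) :
    MeasurableSet[sigmaOf X S] (X k ⁻¹' s) := by
  have h1 : MeasurableSet[MeasurableSpace.comap (X k) inferInstance] (X k ⁻¹' s) := ⟨s, hs, rfl⟩
  exact mono_ms (le_iSup₂ (f := fun k _ => MeasurableSpace.comap (X k) inferInstance) k hk) h1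

/-- On an atom `g⁻¹' {i}` of `comap g`, the conditional expectation of an indicator is
constant, equal to `P (A ∩ T) / P T`. -/

lemma condexp_comap_atom [m0 : MeasurableSpace Ω] {P : Measure Ω} [IsProbabilityMeasure P]
    {g : Ω → ℝ} (hg : Measurable g) (i : ℝ) (hTpos : 0 < P (g ⁻¹' {i}))
    {A : Set Ω} (hA : MeasurableSet A) :
    ∀ ω ∈ g ⁻¹' {i}, (P[A.indicator (fun _ => (1:ℝ)) | MeasurableSpace.comap g inferInstance]) ω
      = (P (A ∩ g ⁻¹' {i})).toReal / (P (g ⁻¹' {i})).toReal := by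
  set T : Set Ω := g ⁻¹' {i} with hTdef
  have hm : MeasurableSpace.comap g inferInstance ≤ m0 := hg.comap_le
  set f : Ω → ℝ := P[A.indicator (fun _ => (1:ℝ)) | MeasurableSpace.comap g inferInstance] with hf
  set c : ℝ := (P (A ∩ T)).toReal / (P T).toReal with hc
  have hTatom : ∀ D : Set Ω, MeasurableSet[MeasurableSpace.comap g inferInstance] D →
      T ∩ D = T ∨ T ∩ D = ∅ := by
    intro D hD
    rcases hD with ⟨E, hE, rfl⟩
    by_cases hiE : i ∈ E
    · left
      have hIE : {i} ∩ E = {i} := Set.inter_eq_left.mpr (Set.singleton_subset_iff.mpr hiE)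
      rw [hTdef, ← Set.preimage_inter, hIE]
    · right
      rw [hTdef, ← Set.preimage_inter]
      have : {i} ∩ E = ∅ := by
        ext x; simp only [Set.mem_inter_iff, Set.mem_singleton_iff, Set.mem_empty_iff_false,
          iff_false, not_and]
        rintro rfl; exact hiE
      rw [this, Set.preimage_empty]
  have hT : MeasurableSet[MeasurableSpace.comap g inferInstance] T :=
    ⟨{i}, measurableSet_singleton i, rfl⟩
  have hTmeas : MeasurableSet[m0] T := hg (measurableSet_singleton i)
  have hind : Integrable (A.indicator (fun _ => (1:ℝ))) P :=
    (integrable_const (1:ℝ)).indicator hA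
  have hPTne : (P T).toReal ≠ 0 := (ENNReal.toReal_pos hTpos.ne' (measure_ne_top P T)).ne'
  have hintT : ∫ ω in T, f ω ∂P = (P (A ∩ T)).toReal := by
    rw [hf, setIntegral_condExp hm hind hT, setIntegral_indicator hA, setIntegral_const,
      smul_eq_mul, mul_one, Set.inter_comm, measureReal_def]
  have hfm : StronglyMeasurable[MeasurableSpace.comap g inferInstance] f :=
    stronglyMeasurable_condExp
  have hfint : Integrable f P := integrable_condExp
  have key : ∀ h : Ω → ℝ, Integrable h P → (∀ ω ∈ T, 0 < h ω) →
      ∫ ω in T, h ω ∂P = 0 → False := by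
    intro h hhint hhpos hhzero
    have h0 : 0 ≤ᵐ[P.restrict T] h :=
      (ae_restrict_iff' hTmeas).mpr (Filter.Eventually.of_forall fun ω hω => (hhpos ω hω).le)
    have hae := (integral_eq_zero_iff_of_nonneg_ae h0 hhint.restrict).mp hhzero
    have h1 : P.restrict T {ω | ¬ h ω = 0} = 0 := by
      simpa [Filter.EventuallyEq, ae_iff] using hae
    have h2 : T ⊆ {ω | ¬ h ω = 0} := fun ω hω => (hhpos ω hω).ne'
    have h3 : P.restrict T T = P T := Measure.restrict_apply_self _ _
    have h4 := measure_mono (μ := P.restrict T) h2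
    rw [h3, h1] at h4
    exact absurd (le_antisymm h4 bot_le) hTpos.ne'
  have hclt : ∀ ω ∈ T, f ω ≤ c := by
    intro ω hω
    by_contra hlt
    push_neg at hlt
    have hS : MeasurableSet[MeasurableSpace.comap g inferInstance] {ω | c < f ω} :=
      measurableSet_lt measurable_const hfm.measurable
    rcases hTatom _ hS with h | h
    · have hsub : T ⊆ {ω | c < f ω} := by rw [← h]; exact Set.inter_subset_right
      refine key (fun ω => f ω - c) (hfint.sub (integrable_const c))
        (fun ω hω => sub_pos.mpr (hsub hω)) ?_
      rw [integral_sub hfint.restrict (integrable_const c).restrict, hintT, setIntegral_const,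
        smul_eq_mul, measureReal_def, hc]
      field_simp
      ring
    · exact absurd (Set.mem_inter hω hlt) (by rw [h]; exact fun hh => hh)
  have hcgt : ∀ ω ∈ T, c ≤ f ω := by
    intro ω hω
    by_contra hlt
    push_neg at hlt
    have hS : MeasurableSet[MeasurableSpace.comap g inferInstance] {ω | f ω < c} :=
      measurableSet_lt hfm.measurable measurable_const
    rcases hTatom _ hS with h | h
    · have hsub : T ⊆ {ω | f ω < c} := by rw [← h]; exact Set.inter_subset_right
      refine key (fun ω => c - f ω) ((integrable_const c).sub hfint)
        (fun ω hω => sub_pos.mpr (hsub hω)) ?_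
      rw [integral_sub (integrable_const c).restrict hfint.restrict, hintT, setIntegral_const,
        smul_eq_mul, measureReal_def, hc]
      field_simp
      ring
    · exact absurd (Set.mem_inter hω hlt) (by rw [h]; exact fun hh => hh)
  exact fun ω hω => le_antisymm (hclt ω hω) (hcgt ω hω)

lemma markov_product [m0 : MeasurableSpace Ω] {P : Measure Ω} [IsProbabilityMeasure P]
    {X : ℤ → Ω → ℝ} (hMC : IsMarkovChain P X) (k : ℤ) (i : ℝ)
    {A B : Set Ω} (hA : MeasurableSet[sigmaOf X (Set.Iic k)] A)
    (hB : MeasurableSet[sigmaOf X (Set.Ici k)] B) :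
    (P (A ∩ B ∩ X k ⁻¹' {i})).toReal * (P (X k ⁻¹' {i})).toReal
      = (P (A ∩ X k ⁻¹' {i})).toReal * (P (B ∩ X k ⁻¹' {i})).toReal := by
  obtain ⟨hX, hMark⟩ := hMC
  set T : Set Ω := X k ⁻¹' {i} with hTdef
  have hTm : MeasurableSet[m0] T := hX k (measurableSet_singleton i)
  by_cases hTpos : P T = 0
  · have e1 : (P (A ∩ B ∩ T)) = 0 :=
      le_antisymm (le_trans (measure_mono Set.inter_subset_right) hTpos.le) bot_le
    have e2 : (P (A ∩ T)) = 0 :=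
      le_antisymm (le_trans (measure_mono Set.inter_subset_right) hTpos.le) bot_le
    rw [e1, e2]; simp
  · have hTpos' : 0 < P T := pos_iff_ne_zero.mpr hTpos
    have hAT : MeasurableSet[sigmaOf X (Set.Iic k)] (A ∩ T) :=
      hA.inter (measurableSet_sigmaOf (Set.mem_Iic.mpr le_rfl) (measurableSet_singleton i))
    have hBT : MeasurableSet[sigmaOf X (Set.Ici k)] (B ∩ T) :=
      hB.inter (measurableSet_sigmaOf (Set.mem_Ici.mpr le_rfl) (measurableSet_singleton i))
    have hIicLe : sigmaOf X (Set.Iic k) ≤ m0 := sigmaOf_le hX _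
    have hIciLe : sigmaOf X (Set.Ici k) ≤ m0 := sigmaOf_le hX _
    have hATm : MeasurableSet[m0] (A ∩ T) := mono_ms hIicLe hAT
    have hBTm : MeasurableSet[m0] (B ∩ T) := mono_ms hIciLe hBT
    have H := hMark k (A ∩ T) (B ∩ T) hAT hBT
    rw [sigmaOf_singleton] at H
    have hfA := condexp_comap_atom (hX k) i hTpos' hATm
    have hfB := condexp_comap_atom (hX k) i hTpos' hBTm
    have hfAB := condexp_comap_atom (hX k) i hTpos' (hATm.inter hBTm)
    set cA : ℝ := (P (A ∩ T ∩ T)).toReal / (P T).toReal with hcA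
    set cB : ℝ := (P (B ∩ T ∩ T)).toReal / (P T).toReal with hcB
    set cAB : ℝ := (P (A ∩ T ∩ (B ∩ T) ∩ T)).toReal / (P T).toReal with hcAB
    have hint1 : ∫ ω in T, (P[(A ∩ T).indicator (fun _ => (1:ℝ)) |
        MeasurableSpace.comap (X k) inferInstance]) ω *
        (P[(B ∩ T).indicator (fun _ => (1:ℝ)) |
        MeasurableSpace.comap (X k) inferInstance]) ω ∂P = cA * cB * (P T).toReal := by
      rw [setIntegral_congr_fun hTm (fun ω hω => by rw [hfA ω hω, hfB ω hω]),
        setIntegral_const, smul_eq_mul, measureReal_def, mul_comm]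
    have hint2 : ∫ ω in T, (P[(A ∩ T ∩ (B ∩ T)).indicator (fun _ => (1:ℝ)) |
        MeasurableSpace.comap (X k) inferInstance]) ω ∂P = cAB * (P T).toReal := by
      rw [setIntegral_congr_fun hTm (fun ω hω => hfAB ω hω), setIntegral_const, smul_eq_mul,
        measureReal_def, mul_comm]
    have heq : cA * cB * (P T).toReal = cAB * (P T).toReal := by
      rw [← hint1, ← hint2]
      exact setIntegral_congr_ae hTm (H.mono fun ω hω _ => hω)
    have hPTne : (P T).toReal ≠ 0 := (ENNReal.toReal_pos hTpos (measure_ne_top P T)).ne'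
    have heq2 : cA * cB = cAB := by
      field_simp at heq
      linarith
    have hsets1 : A ∩ T ∩ T = A ∩ T := by rw [Set.inter_assoc, Set.inter_self]
    have hsets2 : B ∩ T ∩ T = B ∩ T := by rw [Set.inter_assoc, Set.inter_self]
    have hsets3 : A ∩ T ∩ (B ∩ T) ∩ T = A ∩ B ∩ T := by
      ext ω; simp only [Set.mem_inter_iff]; tauto
    rw [hcA, hcB, hcAB, hsets1, hsets2, hsets3] at heq2
    field_simp at heq2
    have hfin : ((P (A ∩ B ∩ T)).toReal * (P T).toReal) * (P T).toReal
        = ((P (A ∩ T)).toReal * (P (B ∩ T)).toReal) * (P T).toReal := by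
      ring_nf
      ring_nf at heq2
      linear_combination (-(P T).toReal) * heq2
    exact mul_right_cancel₀ hPTne hfin

/-- Event that `X k = a`. -/
def Ev [MeasurableSpace Ω] (X : ℤ → Ω → ℝ) (k : ℤ) (a : ℝ) : Set Ω := {ω | X k ω = a}

lemma Ev_meas [MeasurableSpace Ω] {X : ℤ → Ω → ℝ} (hX : ∀ k, Measurable (X k)) (k : ℤ) (a : ℝ) :
    MeasurableSet (Ev X k a) := hX k (measurableSet_singleton a)

lemma shift_measure [MeasurableSpace Ω] {P : Measure Ω} {X : ℤ → Ω → ℝ}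
    (hS : StrictlyStationary P X) (hX : ∀ k, Measurable (X k)) (n : ℤ)
    {C : Set (ℤ → ℝ)} (hC : MeasurableSet C) :
    P ((fun ω => fun k : ℤ => X (k + n) ω) ⁻¹' C) = P ((fun ω => fun k : ℤ => X k ω) ⁻¹' C) := by
  have h1 : Measurable (fun ω => fun k : ℤ => X (k + n) ω) :=
    measurable_pi_lambda _ fun k => hX _
  have h2 : Measurable (fun ω => fun k : ℤ => X k ω) := measurable_pi_lambda _ fun k => hX _
  rw [← Measure.map_apply h1 hC, ← Measure.map_apply h2 hC, hS n]

lemma shift_pair [MeasurableSpace Ω] {P : Measure Ω} {X : ℤ → Ω → ℝ}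
    (hS : StrictlyStationary P X) (hX : ∀ k, Measurable (X k)) (k l n : ℤ) (a b : ℝ) :
    P (Ev X (k + n) a ∩ Ev X (l + n) b) = P (Ev X k a ∩ Ev X l b) := by
  have hC : MeasurableSet {f : ℤ → ℝ | f k = a ∧ f l = b} := by
    have he : {f : ℤ → ℝ | f k = a ∧ f l = b}
        = (fun f : ℤ → ℝ => f k) ⁻¹' {a} ∩ (fun f : ℤ → ℝ => f l) ⁻¹' {b} := rfl
    rw [he]
    exact ((measurable_pi_apply k) (measurableSet_singleton a)).inter
      ((measurable_pi_apply l) (measurableSet_singleton b))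
  exact shift_measure hS hX n hC

lemma shift_single [MeasurableSpace Ω] {P : Measure Ω} {X : ℤ → Ω → ℝ}
    (hS : StrictlyStationary P X) (hX : ∀ k, Measurable (X k)) (k : ℤ) (a : ℝ) :
    P (Ev X k a) = P (Ev X 0 a) := by
  have h := shift_pair hS hX 0 0 k a a
  rw [zero_add] at h
  simpa [Ev, Set.inter_self, Set.setOf_and] using h

lemma states_shift [MeasurableSpace Ω] {P : Measure Ω} {X : ℤ → Ω → ℝ} {N : ℕ}
    (hS : StrictlyStationary P X) (hX : ∀ k, Measurable (X k))
    (h0 : ∀ᵐ ω ∂P, ∃ i : ℕ, i ≤ N ∧ X 0 ω = (i:ℝ)) (k : ℤ) :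
    ∀ᵐ ω ∂P, ∃ i : ℕ, i ≤ N ∧ X k ω = (i:ℝ) := by
  have hC : MeasurableSet {f : ℤ → ℝ | ∃ i : ℕ, i ≤ N ∧ f 0 = (i:ℝ)} := by
    have : {f : ℤ → ℝ | ∃ i : ℕ, i ≤ N ∧ f 0 = (i:ℝ)}
        = ⋃ (i : ℕ) (_ : i ≤ N), (fun f : ℤ → ℝ => f 0) ⁻¹' {(i:ℝ)} := by
      ext f; simp [Set.mem_iUnion]
    rw [this]
    exact MeasurableSet.iUnion fun i => MeasurableSet.iUnion fun _ =>
      (measurable_pi_apply 0) (measurableSet_singleton _)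
  have h := shift_measure hS hX k hC
  rw [ae_iff] at h0 ⊢
  have e0 : {ω | ¬ ∃ i : ℕ, i ≤ N ∧ X 0 ω = (i:ℝ)}
      = ((fun ω => fun j : ℤ => X j ω) ⁻¹' {f : ℤ → ℝ | ∃ i : ℕ, i ≤ N ∧ f 0 = (i:ℝ)})ᶜ := rfl
  have ek : {ω | ¬ ∃ i : ℕ, i ≤ N ∧ X k ω = (i:ℝ)}
      = ((fun ω => fun j : ℤ => X (j + k) ω) ⁻¹' {f : ℤ → ℝ | ∃ i : ℕ, i ≤ N ∧ f 0 = (i:ℝ)})ᶜ := by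
    ext ω; simp [zero_add]
  rw [e0] at h0
  rw [ek]
  have h' := shift_measure hS hX k hC.compl
  rw [Set.preimage_compl, Set.preimage_compl] at h'
  rw [h', ← Set.preimage_compl]
  exact h0

lemma decomp_states [MeasurableSpace Ω] {P : Measure Ω} [IsProbabilityMeasure P]
    {X : ℤ → Ω → ℝ} {N : ℕ} (hX : ∀ k, Measurable (X k)) (k : ℤ)
    (hst : ∀ᵐ ω ∂P, ∃ i : ℕ, i ≤ N ∧ X k ω = (i:ℝ)) {A : Set Ω} (hA : MeasurableSet A) :
    (P A).toReal = ∑ i ∈ Finset.range (N+1), (P (A ∩ Ev X k (i:ℝ))).toReal := by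
  classical
  set U : Set Ω := ⋃ i ∈ Finset.range (N+1), Ev X k (i:ℝ) with hU
  have hUmeas : MeasurableSet U :=
    (Finset.range (N+1)).measurableSet_biUnion fun i _ => Ev_meas hX k _
  have hUc : P Uᶜ = 0 := by
    have hsub : ∀ᵐ ω ∂P, ω ∈ U := by
      refine hst.mono fun ω h => ?_
      obtain ⟨i, hi, hx⟩ := h
      rw [hU]
      simp only [Set.mem_iUnion]
      exact ⟨i, Finset.mem_range.mpr (by omega), hx⟩
    rw [ae_iff] at hsub
    simpa [Set.compl_def] using hsub
  have h1 : P A = P (A ∩ U) := by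
    have := measure_inter_add_diff (μ := P) A hUmeas
    have h2 : P (A \ U) = 0 := measure_mono_null (fun ω hω => hω.2) hUc
    rw [← this, h2, add_zero]
  have h3 : A ∩ U = ⋃ i ∈ Finset.range (N+1), A ∩ Ev X k (i:ℝ) := by
    rw [hU, Set.inter_iUnion₂]
  have h4 : P (A ∩ U) = ∑ i ∈ Finset.range (N+1), P (A ∩ Ev X k (i:ℝ)) := by
    rw [h3]
    refine measure_biUnion_finset ?_ fun i _ => hA.inter (Ev_meas hX k _)
    intro i _ j _ hij
    refine Set.disjoint_left.mpr fun ω hωi hωj => ?_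
    have : ((i:ℕ):ℝ) = ((j:ℕ):ℝ) := by rw [← hωi.2, ← hωj.2]
    exact hij (Nat.cast_injective this)
  rw [h1, h4, ENNReal.toReal_sum fun i _ => measure_ne_top P _]

/-- `(P (Y 0 = i, Y s = j)).toReal`. -/
def TT [MeasurableSpace Ω] (P : Measure Ω) (Y : ℤ → Ω → ℝ) (s : ℕ) (i j : ℕ) : ℝ :=
  (P (Ev Y 0 (i:ℝ) ∩ Ev Y (s:ℤ) (j:ℝ))).toReal

/-- One-step joint pmf. -/
def JJ [MeasurableSpace Ω] (P : Measure Ω) (Y : ℤ → Ω → ℝ) (i j : ℕ) : ℝ := TT P Y 1 i j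

/-- Marginal pmf. -/
def MU [MeasurableSpace Ω] (P : Measure Ω) (Y : ℤ → Ω → ℝ) (i : ℕ) : ℝ :=
  (P (Ev Y 0 (i:ℝ))).toReal

section Chain
set_option linter.unusedSectionVars false

variable [m0 : MeasurableSpace Ω] {P : Measure Ω} [IsProbabilityMeasure P]
  {N : ℕ} {ε : ℝ} {Y : ℤ → Ω → ℝ}

lemma TT_nonneg : 0 ≤ TT P Y s i j := ENNReal.toReal_nonneg
lemma JJ_nonneg : 0 ≤ JJ P Y i j := ENNReal.toReal_nonneg
lemma MU_nonneg : 0 ≤ MU P Y i := ENNReal.toReal_nonneg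

lemma JJ_le_MU : JJ P Y i j ≤ MU P Y i := by
  refine ENNReal.toReal_mono (measure_ne_top P _) (measure_mono Set.inter_subset_left)

lemma pair_move (hC : ConditionS P N ε Y) (k l : ℤ) (a b : ℝ) :
    P (Ev Y k a ∩ Ev Y l b) = P (Ev Y 0 a ∩ Ev Y (l - k) b) := by
  have h := shift_pair hC.1 hC.2.1.1 0 (l - k) k a b
  rw [zero_add, sub_add_cancel] at h
  exact h

lemma j_zero (hC : ConditionS P N ε Y) {i j : ℕ} (hi : i ≤ N) (hj : j ≤ N)
    (h : (i = j ∧ 1 ≤ i) ∨ 2 ≤ |(i:ℤ) - (j:ℤ)|) : JJ P Y i j = 0 := by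
  have h0 := hC.2.2.2.2.2.2.2 i j hi hj h
  have : JJ P Y i j = (P {ω | Y 0 ω = (i:ℝ) ∧ Y 1 ω = (j:ℝ)}).toReal := rfl
  rw [this, h0, ENNReal.toReal_zero]

lemma j_up (hC : ConditionS P N ε Y) {j : ℕ} (hj : j + 1 ≤ N - 1) :
    JJ P Y j (j+1) = ε^(2*(j+1)) ∧ JJ P Y (j+1) j = ε^(2*(j+1)) := by
  have h := hC.2.2.2.2.1 (j+1) (Nat.le_add_left 1 j) hj
  have hcast : ((j+1:ℕ):ℝ) - 1 = (j:ℝ) := by push_cast; ring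
  rw [hcast] at h
  exact h

lemma j_top (hC : ConditionS P N ε Y) (hN : 3 ≤ N) :
    JJ P Y (N-1) N = ε^(2*N-1) ∧ JJ P Y N (N-1) = ε^(2*N-1) := by
  have h1 := hC.2.2.2.2.2.1
  have h2 := hC.2.2.2.2.2.2.1
  have hcast : ((N-1:ℕ):ℝ) = (N:ℝ) - 1 := by
    rw [Nat.cast_sub (by omega)]; norm_num
  constructor
  · have : JJ P Y (N-1) N = (P {ω | Y 0 ω = ((N-1:ℕ):ℝ) ∧ Y 1 ω = (N:ℝ)}).toReal := rfl
    rw [this, hcast]; exact h1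
  · have : JJ P Y N (N-1) = (P {ω | Y 0 ω = (N:ℝ) ∧ Y 1 ω = ((N-1:ℕ):ℝ)}).toReal := rfl
    rw [this, hcast]; exact h2

lemma j_00 (hC : ConditionS P N ε Y) :
    JJ P Y 0 0 = 1 - 2 * (ε^(2*N-1) + ∑ u ∈ Finset.Icc 1 (N-1), ε^(2*u)) := by
  have h := hC.2.2.2.1
  have : JJ P Y 0 0 = (P {ω | Y 0 ω = ((0:ℕ):ℝ) ∧ Y 1 ω = ((0:ℕ):ℝ)}).toReal := rfl
  rw [this]
  norm_num
  exact h

lemma j_symm (hC : ConditionS P N ε Y) (hN : 3 ≤ N) {i j : ℕ} (hi : i ≤ N) (hj : j ≤ N) :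
    JJ P Y i j = JJ P Y j i := by
  rcases Nat.lt_trichotomy i j with h | h | h
  · rcases Nat.lt_or_ge j (i+2) with h2 | h2
    · -- j = i+1
      have hj1 : j = i + 1 := by omega
      subst hj1
      rcases Nat.lt_or_ge (i+1) N with h3 | h3
      · have := j_up hC (j := i) (by omega)
        rw [this.1, this.2]
      · have hiN : i + 1 = N := by omega
        have hi' : i = N - 1 := by omega
        subst hi'
        rw [show N - 1 + 1 = N from by omega]
        have := j_top hC hN
        rw [this.1, this.2]
    · rw [j_zero hC hi hj (Or.inr (by rw [abs_of_nonpos (by omega : (i:ℤ) - j ≤ 0)]; omega)),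
        j_zero hC hj hi (Or.inr (by rw [abs_of_nonneg (by omega : (0:ℤ) ≤ (j:ℤ) - i)]; omega))]
  · subst h; rfl
  · rcases Nat.lt_or_ge i (j+2) with h2 | h2
    · have hi1 : i = j + 1 := by omega
      subst hi1
      rcases Nat.lt_or_ge (j+1) N with h3 | h3
      · have := j_up hC (j := j) (by omega)
        rw [this.1, this.2]
      · have hjN : j + 1 = N := by omega
        have hj' : j = N - 1 := by omega
        subst hj'
        rw [show N - 1 + 1 = N from by omega]
        have := j_top hC hN
        rw [this.1, this.2]
    · rw [j_zero hC hi hj (Or.inr (by rw [abs_of_nonneg (by omega : (0:ℤ) ≤ (i:ℤ) - j)]; omega)),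
        j_zero hC hj hi (Or.inr (by rw [abs_of_nonpos (by omega : (j:ℤ) - i ≤ 0)]; omega))]

lemma mu_sum (hC : ConditionS P N ε Y) (i : ℕ) :
    MU P Y i = ∑ l ∈ Finset.range (N+1), JJ P Y i l := by
  have hst := states_shift hC.1 hC.2.1.1 hC.2.2.1 1
  exact decomp_states hC.2.1.1 1 hst (Ev_meas hC.2.1.1 0 _)

lemma mu_N (hC : ConditionS P N ε Y) (hN : 3 ≤ N) : MU P Y N = ε^(2*N-1) := by
  rw [mu_sum hC]
  rw [Finset.sum_eq_single_of_mem (N-1) (Finset.mem_range.mpr (by omega))]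
  · exact (j_top hC hN).2
  · intro l hl hlne
    rw [Finset.mem_range] at hl
    rcases Nat.lt_or_ge l N with h | h
    · exact j_zero hC le_rfl (by omega)
        (Or.inr (by rw [abs_of_nonneg (by omega : (0:ℤ) ≤ (N:ℤ) - l)]; omega))
    · have : l = N := by omega
      subst this
      exact j_zero hC le_rfl le_rfl (Or.inl ⟨rfl, by omega⟩)

lemma mu_mid_eq (hC : ConditionS P N ε Y) (hN : 3 ≤ N) {j : ℕ} (hj1 : 1 ≤ j) (hj2 : j ≤ N-1) :
    MU P Y j = ε^(2*j) + JJ P Y j (j+1) := by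
  rw [mu_sum hC]
  have hsub : ({j-1, j+1} : Finset ℕ) ⊆ Finset.range (N+1) := by
    intro l hl
    simp only [Finset.mem_insert, Finset.mem_singleton] at hl
    rcases hl with rfl | rfl <;> (rw [Finset.mem_range]; omega)
  have hz : ∀ l ∈ Finset.range (N+1), l ∉ ({j-1, j+1} : Finset ℕ) → JJ P Y j l = 0 := by
    intro l hl hlne
    simp only [Finset.mem_insert, Finset.mem_singleton] at hlne
    push_neg at hlne
    rw [Finset.mem_range] at hl
    rcases Nat.lt_trichotomy l j with h | h | h
    · exact j_zero hC (by omega) (by omega)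
        (Or.inr (by rw [abs_of_nonneg (by omega : (0:ℤ) ≤ (j:ℤ) - l)]; omega))
    · subst h; exact j_zero hC (by omega) (by omega) (Or.inl ⟨rfl, hj1⟩)
    · exact j_zero hC (by omega) (by omega)
        (Or.inr (by rw [abs_of_nonpos (by omega : (j:ℤ) - l ≤ 0)]; omega))
  rw [← Finset.sum_subset hsub hz, Finset.sum_pair (by omega : j - 1 ≠ j + 1)]
  congr 1
  obtain ⟨j', rfl⟩ : ∃ j', j = j' + 1 := ⟨j - 1, by omega⟩
  rw [show j' + 1 - 1 = j' from by omega]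
  exact (j_up hC (by omega)).2

lemma ju_le (hC : ConditionS P N ε Y) (hN : 3 ≤ N) (hε : ε ∈ Set.Ioc (0:ℝ) (1/3))
    {j : ℕ} (hj1 : 1 ≤ j) (hj2 : j ≤ N-1) :
    JJ P Y j (j+1) ≤ ε^(2*j) * ε := by
  obtain ⟨hε0, hε1⟩ := hε
  have hε1' : ε ≤ 1 := by linarith
  rcases Nat.lt_or_ge (j+1) N with h | h
  · rw [(j_up hC (by omega)).1]
    have : ε^(2*(j+1)) = ε^(2*j) * ε * ε := by rw [show 2*(j+1) = 2*j+1+1 from by omega]; ring_nf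
    rw [this]
    have h1 : ε^(2*j) * ε * ε ≤ ε^(2*j) * ε * 1 := by
      apply mul_le_mul_of_nonneg_left hε1' (mul_pos (pow_pos hε0 _) hε0).le
    linarith
  · have hjN : j = N - 1 := by omega
    subst hjN
    rw [show N - 1 + 1 = N from by omega, (j_top hC hN).1,
      show 2*N-1 = 2*(N-1)+1 from by omega, pow_succ]

lemma mu_bounds (hC : ConditionS P N ε Y) (hN : 3 ≤ N) (hε : ε ∈ Set.Ioc (0:ℝ) (1/3))
    {j : ℕ} (hj1 : 1 ≤ j) (hj2 : j ≤ N-1) :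
    ε^(2*j) ≤ MU P Y j ∧ MU P Y j ≤ ε^(2*j) * (1+ε) := by
  rw [mu_mid_eq hC hN hj1 hj2]
  constructor
  · have := JJ_nonneg (P := P) (Y := Y) (i := j) (j := j+1)
    linarith
  · have := ju_le hC hN hε hj1 hj2
    have h2 : (0:ℝ) ≤ ε^(2*j) := (pow_pos hε.1 _).le
    nlinarith

lemma mu_0_ge (hC : ConditionS P N ε Y) (hN : 3 ≤ N) (hε : ε ∈ Set.Ioc (0:ℝ) (1/3)) :
    (1/2 : ℝ) ≤ MU P Y 0 := by
  obtain ⟨hε0, hε1⟩ := hε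
  have hsq : ε^2 ≤ 1/9 := by nlinarith
  have hMU : MU P Y 0 = JJ P Y 0 0 + JJ P Y 0 1 := by
    rw [mu_sum hC]
    have hsub : ({0, 1} : Finset ℕ) ⊆ Finset.range (N+1) := by
      intro l hl
      simp only [Finset.mem_insert, Finset.mem_singleton] at hl
      rcases hl with rfl | rfl <;> (rw [Finset.mem_range]; omega)
    have hz : ∀ l ∈ Finset.range (N+1), l ∉ ({0, 1} : Finset ℕ) → JJ P Y 0 l = 0 := by
      intro l hl hlne
      simp only [Finset.mem_insert, Finset.mem_singleton] at hlne
      push_neg at hlne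
      rw [Finset.mem_range] at hl
      refine j_zero hC (by omega) (by omega) (Or.inr ?_)
      have h2 : ((0:ℕ):ℤ) - (l:ℤ) ≤ 0 := by omega
      rw [abs_of_nonpos h2]
      omega
    rw [← Finset.sum_subset hsub hz, Finset.sum_pair (by omega : (0:ℕ) ≠ 1)]
  have h01 : JJ P Y 0 1 = ε^2 := by
    have := (j_up hC (j := 0) (by omega)).1
    simpa using this
  have hS : ∑ u ∈ Finset.Icc 1 (N-1), ε^(2*u) ≤ 1/8 := by
    have h1 : ∀ u ∈ Finset.Icc 1 (N-1), ε^(2*u) ≤ (1/9 : ℝ)^u := by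
      intro u _
      rw [pow_mul]
      exact pow_le_pow_left₀ (by positivity) hsq u
    calc ∑ u ∈ Finset.Icc 1 (N-1), ε^(2*u) ≤ ∑ u ∈ Finset.Icc 1 (N-1), (1/9:ℝ)^u :=
          Finset.sum_le_sum h1
      _ ≤ 1/8 := by
          have hIc : Finset.Icc 1 (N-1) = Finset.Ico 1 N := by
            rw [← Finset.Ico_add_one_right_eq_Icc, show N - 1 + 1 = N from by omega]
          rw [hIc, geom_sum_Ico (by norm_num : (1/9:ℝ) ≠ 1) (by omega)]
          have hp : (0:ℝ) ≤ (1/9:ℝ)^N := by positivity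
          rw [div_le_iff_of_neg (by norm_num : (1/9:ℝ) - 1 < 0)]
          nlinarith [hp]
  have htop : ε^(2*N-1) ≤ 1/9 := by
    calc ε^(2*N-1) ≤ ε^2 := pow_le_pow_of_le_one hε0.le (by linarith) (by omega)
      _ ≤ 1/9 := hsq
  rw [hMU, j_00 hC, h01]
  have hε2 : (0:ℝ) ≤ ε^2 := by positivity
  linarith

lemma mu_pos (hC : ConditionS P N ε Y) (hN : 3 ≤ N) (hε : ε ∈ Set.Ioc (0:ℝ) (1/3))
    {j : ℕ} (hj : j ≤ N) : 0 < MU P Y j := by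
  rcases Nat.eq_zero_or_pos j with rfl | hj1
  · linarith [mu_0_ge hC hN hε]
  · rcases Nat.lt_or_ge j N with h | h
    · have h1 := (mu_bounds hC hN hε hj1 (by omega)).1
      have h2 : (0:ℝ) < ε^(2*j) := pow_pos hε.1 _
      linarith
    · have : j = N := by omega
      subst this
      rw [mu_N hC hN]
      exact pow_pos hε.1 _

lemma chain_markov (hC : ConditionS P N ε Y) (t : ℤ) (l : ℕ) (k₁ k₂ : ℤ) (a b : ℝ)
    (h1 : k₁ ≤ t) (h2 : t ≤ k₂) :
    (P (Ev Y k₁ a ∩ Ev Y k₂ b ∩ Ev Y t (l:ℝ))).toReal * (P (Ev Y t (l:ℝ))).toReal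
      = (P (Ev Y k₁ a ∩ Ev Y t (l:ℝ))).toReal * (P (Ev Y k₂ b ∩ Ev Y t (l:ℝ))).toReal :=
  markov_product hC.2.1 t (l:ℝ)
    (measurableSet_sigmaOf (Set.mem_Iic.mpr h1) (measurableSet_singleton a))
    (measurableSet_sigmaOf (Set.mem_Ici.mpr h2) (measurableSet_singleton b))

lemma T_succ_fwd (hC : ConditionS P N ε Y) (hN : 3 ≤ N) (hε : ε ∈ Set.Ioc (0:ℝ) (1/3))
    (s i j : ℕ) :
    TT P Y (s+1) i j = ∑ l ∈ Finset.range (N+1), TT P Y s i l * JJ P Y l j / MU P Y l := by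
  have hmeasY := hC.2.1.1
  have hst := states_shift hC.1 hmeasY hC.2.2.1 (s:ℤ)
  have hA : MeasurableSet (Ev Y 0 (i:ℝ) ∩ Ev Y ((s+1:ℕ):ℤ) (j:ℝ)) :=
    (Ev_meas hmeasY _ _).inter (Ev_meas hmeasY _ _)
  have hdec := decomp_states hmeasY (s:ℤ) hst hA
  have hTT : TT P Y (s+1) i j
      = (P (Ev Y 0 (i:ℝ) ∩ Ev Y ((s+1:ℕ):ℤ) (j:ℝ))).toReal := rfl
  rw [hTT, hdec]
  refine Finset.sum_congr rfl fun l hl => ?_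
  rw [Finset.mem_range] at hl
  have hl' : l ≤ N := by omega
  have hmupos := mu_pos hC hN hε hl'
  have hm := chain_markov hC (s:ℤ) l 0 ((s+1:ℕ):ℤ) (i:ℝ) (j:ℝ)
    (by exact_mod_cast Nat.zero_le s) (by exact_mod_cast Nat.le_succ s)
  have h1 : (P (Ev Y (s:ℤ) (l:ℝ))).toReal = MU P Y l := by
    rw [shift_single hC.1 hmeasY]; rfl
  have h2 : (P (Ev Y 0 (i:ℝ) ∩ Ev Y (s:ℤ) (l:ℝ))).toReal = TT P Y s i l := rfl
  have h3 : (P (Ev Y ((s+1:ℕ):ℤ) (j:ℝ) ∩ Ev Y (s:ℤ) (l:ℝ))).toReal = JJ P Y l j := by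
    rw [Set.inter_comm, pair_move hC,
      show ((s+1:ℕ):ℤ) - (s:ℤ) = ((1:ℕ):ℤ) from by push_cast; ring]
    rfl
  rw [h1, h2, h3] at hm
  rw [eq_div_iff hmupos.ne']
  exact hm

lemma T_succ_bwd (hC : ConditionS P N ε Y) (hN : 3 ≤ N) (hε : ε ∈ Set.Ioc (0:ℝ) (1/3))
    (s i j : ℕ) :
    TT P Y (s+1) i j = ∑ l ∈ Finset.range (N+1), JJ P Y i l * TT P Y s l j / MU P Y l := by
  have hmeasY := hC.2.1.1
  have hst := states_shift hC.1 hmeasY hC.2.2.1 (1:ℤ)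
  have hA : MeasurableSet (Ev Y 0 (i:ℝ) ∩ Ev Y ((s+1:ℕ):ℤ) (j:ℝ)) :=
    (Ev_meas hmeasY _ _).inter (Ev_meas hmeasY _ _)
  have hdec := decomp_states hmeasY (1:ℤ) hst hA
  have hTT : TT P Y (s+1) i j
      = (P (Ev Y 0 (i:ℝ) ∩ Ev Y ((s+1:ℕ):ℤ) (j:ℝ))).toReal := rfl
  rw [hTT, hdec]
  refine Finset.sum_congr rfl fun l hl => ?_
  rw [Finset.mem_range] at hl
  have hl' : l ≤ N := by omega
  have hmupos := mu_pos hC hN hε hl'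
  have hm := chain_markov hC (1:ℤ) l 0 ((s+1:ℕ):ℤ) (i:ℝ) (j:ℝ)
    (by norm_num) (by exact_mod_cast Nat.one_le_iff_ne_zero.mpr (Nat.succ_ne_zero s))
  have h1 : (P (Ev Y (1:ℤ) (l:ℝ))).toReal = MU P Y l := by
    rw [shift_single hC.1 hmeasY]; rfl
  have h2 : (P (Ev Y 0 (i:ℝ) ∩ Ev Y (1:ℤ) (l:ℝ))).toReal = JJ P Y i l := rfl
  have h3 : (P (Ev Y ((s+1:ℕ):ℤ) (j:ℝ) ∩ Ev Y (1:ℤ) (l:ℝ))).toReal = TT P Y s l j := by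
    rw [Set.inter_comm, pair_move hC,
      show ((s+1:ℕ):ℤ) - (1:ℤ) = ((s:ℕ):ℤ) from by push_cast; ring]
    rfl
  rw [h1, h2, h3] at hm
  rw [eq_div_iff hmupos.ne']
  exact hm

lemma T_symm (hC : ConditionS P N ε Y) (hN : 3 ≤ N) (hε : ε ∈ Set.Ioc (0:ℝ) (1/3)) :
    ∀ s i j, i ≤ N → j ≤ N → TT P Y s i j = TT P Y s j i := by
  intro s
  induction s with
  | zero =>
    intro i j hi hj
    have h1 : TT P Y 0 i j = (P (Ev Y 0 (i:ℝ) ∩ Ev Y 0 (j:ℝ))).toReal := rfl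
    have h2 : TT P Y 0 j i = (P (Ev Y 0 (j:ℝ) ∩ Ev Y 0 (i:ℝ))).toReal := rfl
    rw [h1, h2, Set.inter_comm]
  | succ s ih =>
    intro i j hi hj
    rw [T_succ_fwd hC hN hε s i j, T_succ_bwd hC hN hε s j i]
    refine Finset.sum_congr rfl fun l hl => ?_
    rw [Finset.mem_range] at hl
    rw [ih i l hi (by omega), j_symm hC hN (by omega : l ≤ N) hj]
    ring

lemma TT_zero_ne {i j : ℕ} (hne : i ≠ j) : TT P Y 0 i j = 0 := by
  have hempty : Ev Y 0 (i:ℝ) ∩ Ev Y 0 (j:ℝ) = ∅ := by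
    apply Set.eq_empty_iff_forall_notMem.mpr
    intro ω hω
    exact hne (Nat.cast_injective (hω.1.symm.trans hω.2 : (i:ℝ) = (j:ℝ)))
  have h1 : TT P Y 0 i j = (P (Ev Y 0 (i:ℝ) ∩ Ev Y 0 (j:ℝ))).toReal := rfl
  rw [h1, hempty, measure_empty, ENNReal.toReal_zero]

lemma TT_zero_self (i : ℕ) : TT P Y 0 i i = MU P Y i := by
  have h1 : TT P Y 0 i i = (P (Ev Y 0 (i:ℝ) ∩ Ev Y 0 (i:ℝ))).toReal := rfl
  rw [h1, Set.inter_self]; rfl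

variable {mm : ℕ}

lemma Qlow (hC : ConditionS P N ε Y) (hN : 3 ≤ N) (hε : ε ∈ Set.Ioc (0:ℝ) (1/3))
    (hm1 : 1 ≤ mm) (hm2 : 2*mm < N) :
    ∀ s, s ≤ mm → ∀ j, j + s < N - mm → TT P Y s (N-mm) j = 0 := by
  intro s
  induction s with
  | zero => intro _ j hj; exact TT_zero_ne (by omega)
  | succ s ih =>
    intro hs j hj
    rw [T_succ_fwd hC hN hε]
    refine Finset.sum_eq_zero fun l hl => ?_
    rw [Finset.mem_range] at hl
    rcases Nat.lt_or_ge (l + s) (N - mm) with h | h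
    · rw [ih (by omega) l h, zero_mul, zero_div]
    · have hJ : JJ P Y l j = 0 := by
        refine j_zero hC (by omega) (by omega) (Or.inr ?_)
        rw [abs_of_nonneg (by omega : (0:ℤ) ≤ (l:ℤ) - j)]
        omega
      rw [hJ, mul_zero, zero_div]

lemma Qhigh (hC : ConditionS P N ε Y) (hN : 3 ≤ N) (hε : ε ∈ Set.Ioc (0:ℝ) (1/3))
    (hm1 : 1 ≤ mm) (hm2 : 2*mm < N) :
    ∀ s, s ≤ mm → ∀ j, j ≤ N → N - mm + s < j → TT P Y s (N-mm) j = 0 := by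
  intro s
  induction s with
  | zero => intro _ j _ hj; exact TT_zero_ne (by omega)
  | succ s ih =>
    intro hs j hjN hj
    rw [T_succ_fwd hC hN hε]
    refine Finset.sum_eq_zero fun l hl => ?_
    rw [Finset.mem_range] at hl
    rcases Nat.lt_or_ge (N - mm + s) l with h | h
    · rw [ih (by omega) l (by omega) h, zero_mul, zero_div]
    · have hJ : JJ P Y l j = 0 := by
        refine j_zero hC (by omega) (by omega) (Or.inr ?_)
        rw [abs_of_nonpos (by omega : (l:ℤ) - j ≤ 0)]
        omega
      rw [hJ, mul_zero, zero_div]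

lemma ratio_nonneg (hC : ConditionS P N ε Y) (l j : ℕ) :
    0 ≤ JJ P Y l j / MU P Y l := div_nonneg JJ_nonneg MU_nonneg

lemma ratio_le_one (hC : ConditionS P N ε Y) (hN : 3 ≤ N) (hε : ε ∈ Set.Ioc (0:ℝ) (1/3))
    {l : ℕ} (hl : l ≤ N) (j : ℕ) : JJ P Y l j / MU P Y l ≤ 1 :=
  (div_le_one (mu_pos hC hN hε hl)).mpr JJ_le_MU

lemma ratio_up (hC : ConditionS P N ε Y) (hN : 3 ≤ N) (hε : ε ∈ Set.Ioc (0:ℝ) (1/3))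
    {l : ℕ} (hl : l + 1 ≤ N) :
    JJ P Y l (l+1) / MU P Y l ≤ (if l + 1 = N then ε else 2*ε^2) := by
  have hε0 := hε.1
  rcases Nat.eq_zero_or_pos l with rfl | hl1
  · rw [if_neg (by omega)]
    have h01 : JJ P Y 0 1 = ε^2 := by simpa using (j_up hC (j := 0) (by omega)).1
    have hmu := mu_0_ge hC hN hε
    have : JJ P Y 0 (0+1) / MU P Y 0 ≤ ε^2 / (1/2) := by
      simp only [Nat.zero_add] at *
      rw [h01]
      exact div_le_div_of_nonneg_left (by positivity) (by linarith) hmu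
    simp only [Nat.zero_add] at this ⊢
    calc JJ P Y 0 1 / MU P Y 0 ≤ ε^2 / (1/2) := this
      _ = 2*ε^2 := by ring
  · by_cases hN1 : l + 1 = N
    · rw [if_pos hN1]
      have hl' : l = N - 1 := by omega
      subst hl'
      rw [show N - 1 + 1 = N from by omega, (j_top hC hN).1]
      have hmu := (mu_bounds hC hN hε (by omega : 1 ≤ N-1) le_rfl).1
      calc ε^(2*N-1) / MU P Y (N-1) ≤ ε^(2*N-1) / ε^(2*(N-1)) :=
            div_le_div_of_nonneg_left (by positivity) (pow_pos hε0 _) hmu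
        _ = ε := by
            rw [show 2*N-1 = 2*(N-1)+1 from by omega, pow_succ]
            exact mul_div_cancel_left₀ ε (pow_ne_zero _ hε0.ne')
    · rw [if_neg hN1, (j_up hC (by omega)).1]
      have hmu := (mu_bounds hC hN hε hl1 (by omega : l ≤ N - 1)).1
      calc ε^(2*(l+1)) / MU P Y l ≤ ε^(2*(l+1)) / ε^(2*l) :=
            div_le_div_of_nonneg_left (by positivity) (pow_pos hε0 _) hmu
        _ = ε^2 := by
            rw [show 2*(l+1) = 2*l+2 from by omega, pow_add]
            exact mul_div_cancel_left₀ _ (pow_ne_zero _ hε0.ne')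
        _ ≤ 2*ε^2 := by nlinarith [sq_nonneg ε]

lemma Qbound (hC : ConditionS P N ε Y) (hN : 3 ≤ N) (hε : ε ∈ Set.Ioc (0:ℝ) (1/3))
    (hm1 : 1 ≤ mm) (hm2 : 2*mm < N) :
    ∀ s, s ≤ mm → ∀ j, j ≤ N →
      TT P Y s (N-mm) j ≤ 2 * 3^s * ε^(N - mm + s + j - (if j = N then 1 else 0)) := by
  have hε0 := hε.1
  have hε1 := hε.2
  intro s
  induction s with
  | zero =>
    intro _ j hjN
    by_cases hj : j = N - mm
    · subst hj
      rw [TT_zero_self, if_neg (by omega), pow_zero]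
      have hb := (mu_bounds hC hN hε (by omega : 1 ≤ N - mm) (by omega : N - mm ≤ N - 1)).2
      calc MU P Y (N-mm) ≤ ε^(2*(N-mm)) * (1+ε) := hb
        _ ≤ ε^(2*(N-mm)) * 2 := by nlinarith [pow_pos hε0 (2*(N-mm))]
        _ = 2 * 1 * ε^(N - mm + 0 + (N-mm) - 0) := by
            rw [show N - mm + 0 + (N-mm) - 0 = 2*(N-mm) from by omega]; ring
    · rw [TT_zero_ne (by omega)]
      have : (0:ℝ) < ε^(N - mm + 0 + j - (if j = N then 1 else 0)) := pow_pos hε0 _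
      positivity
  | succ s ih =>
    intro hs j hjN
    have hRHSpos : (0:ℝ) < 2 * 3^(s+1) * ε^(N - mm + (s+1) + j - (if j = N then 1 else 0)) := by
      have := pow_pos hε0 (N - mm + (s+1) + j - (if j = N then 1 else 0))
      positivity
    rcases Nat.eq_zero_or_pos j with rfl | hj1
    · rw [Qlow hC hN hε hm1 hm2 (s+1) hs 0 (by omega)]
      exact hRHSpos.le
    by_cases hjN' : j = N
    · rw [hjN']
      rw [T_succ_fwd hC hN hε, if_pos rfl]
      rw [Finset.sum_eq_single_of_mem (N-1) (Finset.mem_range.mpr (by omega))]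
      · rw [mul_div_assoc]
        have hQ := ih (by omega) (N-1) (by omega)
        rw [if_neg (by omega)] at hQ
        have hr := ratio_up hC hN hε (l := N-1) (by omega)
        rw [if_pos (by omega), show N - 1 + 1 = N from by omega] at hr
        calc TT P Y s (N-mm) (N-1) * (JJ P Y (N-1) N / MU P Y (N-1))
            ≤ (2 * 3^s * ε^(N - mm + s + (N-1) - 0)) * ε := by
              refine mul_le_mul hQ hr (ratio_nonneg hC _ _) ?_
              have := pow_pos hε0 (N - mm + s + (N-1) - 0)
              positivity
          _ ≤ 2 * 3^(s+1) * ε^(N - mm + (s+1) + N - 1) := by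
              rw [show N - mm + (s+1) + N - 1 = (N - mm + s + (N-1) - 0) + 1 from by omega,
                pow_succ, pow_succ]
              have hp := pow_pos hε0 (N - mm + s + (N-1) - 0)
              have h3 : (0:ℝ) < (3:ℝ)^s := by positivity
              nlinarith [mul_pos (mul_pos h3 hp) hε0]
      · intro l hl hlne
        rw [Finset.mem_range] at hl
        rcases Nat.lt_or_ge l N with h | h
        · have hJ : JJ P Y l N = 0 := by
            refine j_zero hC (by omega) le_rfl (Or.inr ?_)
            rw [abs_of_nonpos (by omega : (l:ℤ) - N ≤ 0)]; omega
          rw [hJ, mul_zero, zero_div]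
        · have hlN : l = N := by omega
          subst hlN
          rw [j_zero hC le_rfl le_rfl (Or.inl ⟨rfl, by omega⟩), mul_zero, zero_div]
    · -- 1 ≤ j ≤ N-1
      obtain ⟨j', rfl⟩ : ∃ j', j = j' + 1 := ⟨j - 1, by omega⟩
      rw [T_succ_fwd hC hN hε]
      have hsub : ({j', j' + 2} : Finset ℕ) ⊆ Finset.range (N+1) := by
        intro l hl
        simp only [Finset.mem_insert, Finset.mem_singleton] at hl
        rcases hl with rfl | rfl <;> (rw [Finset.mem_range]; omega)
      have hz : ∀ l ∈ Finset.range (N+1), l ∉ ({j', j' + 2} : Finset ℕ) →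
          TT P Y s (N-mm) l * JJ P Y l (j'+1) / MU P Y l = 0 := by
        intro l hl hlne
        simp only [Finset.mem_insert, Finset.mem_singleton] at hlne
        push_neg at hlne
        rw [Finset.mem_range] at hl
        have hJ : JJ P Y l (j'+1) = 0 := by
          rcases Nat.lt_trichotomy l (j'+1) with h | h | h
          · refine j_zero hC (by omega) (by omega) (Or.inr ?_)
            rw [abs_of_nonpos (by omega : (l:ℤ) - (j'+1:ℕ) ≤ 0)]; omega
          · subst h; exact j_zero hC (by omega) (by omega) (Or.inl ⟨rfl, by omega⟩)
          · refine j_zero hC (by omega) (by omega) (Or.inr ?_)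
            rw [abs_of_nonneg (by omega : (0:ℤ) ≤ (l:ℤ) - (j'+1:ℕ))]; omega
        rw [hJ, mul_zero, zero_div]
      rw [← Finset.sum_subset hsub hz, Finset.sum_pair (by omega : j' ≠ j' + 2)]
      rw [if_neg hjN']
      -- term 1 : l = j'
      have ht1 : TT P Y s (N-mm) j' * JJ P Y j' (j'+1) / MU P Y j'
          ≤ 4 * 3^s * ε^(N - mm + (s+1) + (j'+1)) := by
        rw [mul_div_assoc]
        have hQ := ih (by omega) j' (by omega)
        rw [if_neg (by omega)] at hQ
        have hr := ratio_up hC hN hε (l := j') (by omega)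
        rw [if_neg (by omega)] at hr
        calc TT P Y s (N-mm) j' * (JJ P Y j' (j'+1) / MU P Y j')
            ≤ (2 * 3^s * ε^(N - mm + s + j')) * (2*ε^2) := by
              refine mul_le_mul hQ hr (ratio_nonneg hC _ _) ?_
              have := pow_pos hε0 (N - mm + s + j'); positivity
          _ = 4 * 3^s * ε^(N - mm + (s+1) + (j'+1)) := by
              rw [show N - mm + (s+1) + (j'+1) = (N - mm + s + j') + 2 from by omega, pow_add]
              ring
      -- term 2 : l = j' + 2
      have ht2 : TT P Y s (N-mm) (j'+2) * JJ P Y (j'+2) (j'+1) / MU P Y (j'+2)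
          ≤ 2 * 3^s * ε^(N - mm + (s+1) + (j'+1)) := by
        by_cases hc : j' + 2 ≤ N
        · by_cases hcN : j' + 2 = N ∧ N - mm + s < j' + 2
          · rw [Qhigh hC hN hε hm1 hm2 s (by omega) (j'+2) hc hcN.2, zero_mul, zero_div]
            have := pow_pos hε0 (N - mm + (s+1) + (j'+1)); positivity
          · -- either j'+2 < N, use bound with exponent, or Qhigh fails: then j'+2 ≤ N-mm+s
            rcases Nat.lt_or_ge (N - mm + s) (j'+2) with hhi | hhi
            · -- Qhigh applies
              rw [Qhigh hC hN hε hm1 hm2 s (by omega) (j'+2) hc hhi, zero_mul, zero_div]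
              have := pow_pos hε0 (N - mm + (s+1) + (j'+1)); positivity
            · -- j'+2 ≤ N-mm+s ≤ N-1 < N
              rw [mul_div_assoc]
              have hQ := ih (by omega) (j'+2) hc
              have hj2N : j' + 2 ≠ N := by omega
              rw [if_neg hj2N] at hQ
              have hr := ratio_le_one hC hN hε hc (j'+1)
              calc TT P Y s (N-mm) (j'+2) * (JJ P Y (j'+2) (j'+1) / MU P Y (j'+2))
                  ≤ (2 * 3^s * ε^(N - mm + s + (j'+2))) * 1 := by
                    refine mul_le_mul hQ hr (ratio_nonneg hC _ _) ?_
                    have := pow_pos hε0 (N - mm + s + (j'+2)); positivity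
                _ = 2 * 3^s * ε^(N - mm + (s+1) + (j'+1)) := by
                    rw [show N - mm + s + (j'+2) = N - mm + (s+1) + (j'+1) from by omega]
                    ring
        · -- j'+2 > N : but j'+2 ∈ {j', j'+2} ⊆ range (N+1) gave j'+2 ≤ N; contradiction
          exfalso
          have h2 := hsub (by simp : j' + 2 ∈ ({j', j' + 2} : Finset ℕ))
          rw [Finset.mem_range] at h2
          omega
      calc TT P Y s (N-mm) j' * JJ P Y j' (j'+1) / MU P Y j'
            + TT P Y s (N-mm) (j'+2) * JJ P Y (j'+2) (j'+1) / MU P Y (j'+2)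
          ≤ 4 * 3^s * ε^(N - mm + (s+1) + (j'+1)) + 2 * 3^s * ε^(N - mm + (s+1) + (j'+1)) := by
            exact add_le_add ht1 ht2
        _ = 2 * 3^(s+1) * ε^(N - mm + (s+1) + (j'+1)) := by
            rw [pow_succ]; ring

lemma Qdiag_step (hC : ConditionS P N ε Y) (hN : 3 ≤ N) (hε : ε ∈ Set.Ioc (0:ℝ) (1/3))
    (hm1 : 1 ≤ mm) (hm2 : 2*mm < N) (s : ℕ) (hs : s + 1 ≤ mm) :
    TT P Y (s+1) (N-mm) (N-mm+s+1)
      = TT P Y s (N-mm) (N-mm+s) * JJ P Y (N-mm+s) (N-mm+s+1) / MU P Y (N-mm+s) := by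
  rw [T_succ_fwd hC hN hε]
  rw [Finset.sum_eq_single_of_mem (N-mm+s) (Finset.mem_range.mpr (by omega))]
  intro l hl hlne
  rw [Finset.mem_range] at hl
  rcases Nat.lt_trichotomy l (N-mm+s+1) with h | h | h
  · have hJ : JJ P Y l (N-mm+s+1) = 0 := by
      refine j_zero hC (by omega) (by omega) (Or.inr ?_)
      rw [abs_of_nonpos (by omega : (l:ℤ) - ((N-mm+s+1 : ℕ):ℤ) ≤ 0)]
      omega
    rw [hJ, mul_zero, zero_div]
  · subst h
    rw [j_zero hC (by omega) (by omega) (Or.inl ⟨rfl, by omega⟩), mul_zero, zero_div]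
  · rw [Qhigh hC hN hε hm1 hm2 s (by omega) l (by omega) (by omega), zero_mul, zero_div]

lemma Qdiag (hC : ConditionS P N ε Y) (hN : 3 ≤ N) (hε : ε ∈ Set.Ioc (0:ℝ) (1/3))
    (hm1 : 1 ≤ mm) (hm2 : 2*mm < N) :
    ∀ s, s ≤ mm →
      ε^(2*(N-mm) + 2*s - (if s = mm then 1 else 0)) / (1+ε)^s ≤ TT P Y s (N-mm) (N-mm+s)
      ∧ TT P Y s (N-mm) (N-mm+s) ≤ ε^(2*(N-mm) + 2*s - (if s = mm then 1 else 0)) * (1+ε) := by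
  have hε0 := hε.1
  have hε1 := hε.2
  have h1ε : (0:ℝ) < 1 + ε := by linarith
  intro s
  induction s with
  | zero =>
    intro _
    have hE : 2*(N-mm) + 2*0 - (if (0:ℕ) = mm then 1 else 0) = 2*(N-mm) := by
      rw [if_neg (by omega : ¬ (0:ℕ) = mm)]
      omega
    rw [hE, Nat.add_zero, pow_zero, div_one, TT_zero_self]
    exact ⟨(mu_bounds hC hN hε (by omega) (by omega)).1,
      (mu_bounds hC hN hε (by omega) (by omega)).2⟩
  | succ s ih =>
    intro hs
    obtain ⟨ihl, ihu⟩ := ih (by omega)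
    rw [if_neg (by omega)] at ihl ihu
    rw [show N - mm + (s + 1) = N - mm + s + 1 from by omega, Qdiag_step hC hN hε hm1 hm2 s hs]
    set Q : ℝ := TT P Y s (N-mm) (N-mm+s) with hQdef
    set M : ℝ := MU P Y (N-mm+s) with hMdef
    set J : ℝ := JJ P Y (N-mm+s) (N-mm+s+1) with hJdef
    have hMpos : 0 < M := mu_pos hC hN hε (by omega)
    have hMlo : ε^(2*(N-mm+s)) ≤ M := (mu_bounds hC hN hε (by omega) (by omega)).1
    have hMup : M ≤ ε^(2*(N-mm+s)) * (1+ε) := (mu_bounds hC hN hε (by omega) (by omega)).2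
    have hJnn : 0 ≤ J := JJ_nonneg
    have hQnn : 0 ≤ Q := TT_nonneg
    have hJval : J = ε^(2*(N-mm) + 2*s + 2 - (if s + 1 = mm then 1 else 0)) := by
      by_cases hsm : s + 1 = mm
      · rw [if_pos hsm, hJdef, show N - mm + s = N - 1 from by omega,
          show N - 1 + 1 = N from by omega, (j_top hC hN).1]
        congr 1
        omega
      · rw [if_neg hsm, hJdef, (j_up hC (by omega : (N - mm + s) + 1 ≤ N - 1)).1]
        congr 1
        omega
    have hexp : 2*(N-mm) + 2*(s+1) - (if s + 1 = mm then 1 else 0)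
        = 2*(N-mm) + 2*s + 2 - (if s + 1 = mm then 1 else 0) := by
      by_cases hsm : s + 1 = mm <;> simp [hsm] <;> omega
    rw [hexp]
    set e : ℕ := 2*(N-mm) + 2*s + 2 - (if s + 1 = mm then 1 else 0) with hedef
    have hee : ε ^ e = ε^(2*(N-mm) + 2*s) * ε^(e - (2*(N-mm) + 2*s)) := by
      rw [← pow_add]
      congr 1
      rw [hedef]
      by_cases hsm : s + 1 = mm <;> simp [hsm] <;> omega
    have hJem : J = ε^(2*(N-mm+s)) * ε^(e - (2*(N-mm) + 2*s)) := by
      rw [hJval, hee]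
      congr 2
      omega
    constructor
    · -- lower bound
      have step1 : (ε^(2*(N-mm) + 2*s) / (1+ε)^s) * J / M ≤ Q * J / M := by
        apply div_le_div_of_nonneg_right ?_ hMpos.le
        exact mul_le_mul_of_nonneg_right ihl hJnn
      have step2 : (ε^(2*(N-mm) + 2*s) / (1+ε)^s) * J / (ε^(2*(N-mm+s)) * (1+ε))
          ≤ (ε^(2*(N-mm) + 2*s) / (1+ε)^s) * J / M :=
        div_le_div_of_nonneg_left (by positivity) hMpos hMup
      have step3 : (ε^(2*(N-mm) + 2*s) / (1+ε)^s) * J / (ε^(2*(N-mm+s)) * (1+ε))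
          = ε ^ e / (1+ε)^(s+1) := by
        rw [hJem, hee]
        have h2 : ε^(2*(N-mm+s)) ≠ 0 := (pow_pos hε0 _).ne'
        have h3 : (1+ε)^s ≠ 0 := (pow_pos h1ε _).ne'
        have h4 : 2*(N-mm+s) = 2*(N-mm) + 2*s := by omega
        rw [h4]
        field_simp
        ring
      linarith
    · -- upper bound
      have step1 : Q * J / M ≤ (ε^(2*(N-mm) + 2*s) * (1+ε)) * J / M := by
        apply div_le_div_of_nonneg_right ?_ hMpos.le
        exact mul_le_mul_of_nonneg_right ihu hJnn
      have step2 : (ε^(2*(N-mm) + 2*s) * (1+ε)) * J / M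
          ≤ (ε^(2*(N-mm) + 2*s) * (1+ε)) * J / (ε^(2*(N-mm+s))) :=
        div_le_div_of_nonneg_left (by positivity) (pow_pos hε0 _) hMlo
      have step3 : (ε^(2*(N-mm) + 2*s) * (1+ε)) * J / (ε^(2*(N-mm+s)))
          = ε ^ e * (1+ε) := by
        rw [hJem, hee]
        have h2 : ε^(2*(N-mm+s)) ≠ 0 := (pow_pos hε0 _).ne'
        have h4 : 2*(N-mm+s) = 2*(N-mm) + 2*s := by omega
        rw [h4]
        field_simp
      linarith

lemma PB_formula (hC : ConditionS P N ε Y) (hN : 3 ≤ N) (hε : ε ∈ Set.Ioc (0:ℝ) (1/3))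
    (hm1 : 1 ≤ mm) (hm2 : 2*mm < N) :
    (P (Ev Y (-(mm:ℤ)) ((N-mm:ℕ):ℝ) ∩ Ev Y ((mm:ℕ):ℤ) ((N-mm:ℕ):ℝ))).toReal
      = ∑ j ∈ Finset.range (N+1),
          TT P Y mm (N-mm) j * TT P Y mm (N-mm) j / MU P Y j := by
  have hmeasY := hC.2.1.1
  have hA : MeasurableSet (Ev Y (-(mm:ℤ)) ((N-mm:ℕ):ℝ) ∩ Ev Y ((mm:ℕ):ℤ) ((N-mm:ℕ):ℝ)) :=
    (Ev_meas hmeasY _ _).inter (Ev_meas hmeasY _ _)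
  have hdec := decomp_states hmeasY 0 hC.2.2.1 hA
  rw [hdec]
  refine Finset.sum_congr rfl fun j hj => ?_
  rw [Finset.mem_range] at hj
  have hj' : j ≤ N := by omega
  have hmupos := mu_pos hC hN hε hj'
  have hm := chain_markov hC 0 j (-(mm:ℤ)) ((mm:ℕ):ℤ) ((N-mm:ℕ):ℝ) ((N-mm:ℕ):ℝ)
    (by omega) (by positivity)
  have h1 : (P (Ev Y (0:ℤ) (j:ℝ))).toReal = MU P Y j := rfl
  have h2 : (P (Ev Y (-(mm:ℤ)) ((N-mm:ℕ):ℝ) ∩ Ev Y (0:ℤ) (j:ℝ))).toReal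
      = TT P Y mm (N-mm) j := by
    rw [pair_move hC, show (0:ℤ) - -(mm:ℤ) = ((mm:ℕ):ℤ) from by push_cast; ring]
    rfl
  have h3 : (P (Ev Y ((mm:ℕ):ℤ) ((N-mm:ℕ):ℝ) ∩ Ev Y (0:ℤ) (j:ℝ))).toReal
      = TT P Y mm (N-mm) j := by
    rw [Set.inter_comm]
    have : (P (Ev Y (0:ℤ) (j:ℝ) ∩ Ev Y ((mm:ℕ):ℤ) ((N-mm:ℕ):ℝ))).toReal
        = TT P Y mm j (N-mm) := rfl
    rw [this, T_symm hC hN hε mm j (N-mm) hj' (by omega)]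
  rw [h1, h2, h3] at hm
  rw [eq_div_iff hmupos.ne']
  exact hm

lemma key (hC : ConditionS P N ε Y) (hN : 3 ≤ N) (hε : ε ∈ Set.Ioc (0:ℝ) (1/3))
    (hm1 : 1 ≤ mm) (hm2 : 2*mm < N) :
    ε^(2*N-1) / (1+ε)^(2*mm)
      ≤ (P (Ev Y (-(mm:ℤ)) ((N-mm:ℕ):ℝ) ∩ Ev Y ((mm:ℕ):ℤ) ((N-mm:ℕ):ℝ))).toReal
    ∧ (P (Ev Y (-(mm:ℤ)) ((N-mm:ℕ):ℝ) ∩ Ev Y ((mm:ℕ):ℤ) ((N-mm:ℕ):ℝ))).toReal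
      ≤ ε^(2*N-1) * ((1+ε)^2 + (N:ℝ) * (2*3^mm)^2 * ε) := by
  have hε0 := hε.1
  have hε1 := hε.2
  have h1ε : (0:ℝ) < 1 + ε := by linarith
  have hQd := Qdiag hC hN hε hm1 hm2 mm le_rfl
  rw [if_pos rfl, show 2*(N-mm) + 2*mm - 1 = 2*N-1 from by omega,
    show N - mm + mm = N from by omega] at hQd
  obtain ⟨hQlo, hQup⟩ := hQd
  set Q : ℝ := TT P Y mm (N-mm) N with hQdef
  have hQnn : 0 ≤ Q := TT_nonneg
  have hlonn : (0:ℝ) ≤ ε^(2*N-1) / (1+ε)^mm := by positivity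
  have hpowpos : (0:ℝ) < ε^(2*N-1) := pow_pos hε0 _
  rw [PB_formula hC hN hε hm1 hm2]
  constructor
  · -- lower bound
    have hterm : ε^(2*N-1) / (1+ε)^(2*mm) ≤ Q * Q / MU P Y N := by
      rw [mu_N hC hN]
      have h1 : (ε^(2*N-1) / (1+ε)^mm) * (ε^(2*N-1) / (1+ε)^mm) ≤ Q * Q :=
        mul_self_le_mul_self hlonn hQlo
      have h2 : (ε^(2*N-1) / (1+ε)^mm) * (ε^(2*N-1) / (1+ε)^mm) / ε^(2*N-1)
          = ε^(2*N-1) / (1+ε)^(2*mm) := by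
        have hne : ε^(2*N-1) ≠ 0 := hpowpos.ne'
        have h1ne : (1+ε)^mm ≠ 0 := (pow_pos h1ε mm).ne'
        field_simp
        ring
      rw [← h2]
      exact div_le_div_of_nonneg_right h1 hpowpos.le
    calc ε^(2*N-1) / (1+ε)^(2*mm) ≤ Q * Q / MU P Y N := hterm
      _ ≤ ∑ j ∈ Finset.range (N+1), TT P Y mm (N-mm) j * TT P Y mm (N-mm) j / MU P Y j := by
          refine Finset.single_le_sum (f := fun j => TT P Y mm (N-mm) j * TT P Y mm (N-mm) j
            / MU P Y j) (fun j _ => div_nonneg (mul_nonneg TT_nonneg TT_nonneg) MU_nonneg)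
            (Finset.mem_range.mpr (by omega))
  · -- upper bound
    rw [Finset.sum_range_succ]
    have htop : Q * Q / MU P Y N ≤ ε^(2*N-1) * (1+ε)^2 := by
      rw [mu_N hC hN]
      have h1 : Q * Q ≤ (ε^(2*N-1) * (1+ε)) * (ε^(2*N-1) * (1+ε)) :=
        mul_self_le_mul_self hQnn hQup
      have h2 : (ε^(2*N-1) * (1+ε)) * (ε^(2*N-1) * (1+ε)) / ε^(2*N-1)
          = ε^(2*N-1) * (1+ε)^2 := by
        have hne : ε^(2*N-1) ≠ 0 := hpowpos.ne'
        field_simp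
      rw [← h2]
      exact div_le_div_of_nonneg_right h1 hpowpos.le
    have hrest : ∑ j ∈ Finset.range N, TT P Y mm (N-mm) j * TT P Y mm (N-mm) j / MU P Y j
        ≤ (N:ℝ) * ((2*3^mm)^2 * (ε^(2*N-1) * ε)) := by
      have hbound : ∀ j ∈ Finset.range N,
          TT P Y mm (N-mm) j * TT P Y mm (N-mm) j / MU P Y j
            ≤ (2*3^mm)^2 * (ε^(2*N-1) * ε) := by
        intro j hj
        rw [Finset.mem_range] at hj
        rcases Nat.eq_zero_or_pos j with rfl | hj1
        · rw [Qlow hC hN hε hm1 hm2 mm le_rfl 0 (by omega), zero_mul, zero_div]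
          positivity
        · have hQb := Qbound hC hN hε hm1 hm2 mm le_rfl j (by omega)
          rw [if_neg (by omega), show N - mm + mm + j - 0 = N + j from by omega] at hQb
          have hMlo := (mu_bounds hC hN hε hj1 (by omega)).1
          have hMpos := mu_pos hC hN hε (by omega : j ≤ N)
          have hQjnn : (0:ℝ) ≤ TT P Y mm (N-mm) j := TT_nonneg
          have hnum : TT P Y mm (N-mm) j * TT P Y mm (N-mm) j
              ≤ (2*3^mm * ε^(N+j)) * (2*3^mm * ε^(N+j)) := mul_self_le_mul_self hQjnn hQb
          calc TT P Y mm (N-mm) j * TT P Y mm (N-mm) j / MU P Y j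
              ≤ (2*3^mm * ε^(N+j)) * (2*3^mm * ε^(N+j)) / MU P Y j :=
                div_le_div_of_nonneg_right hnum hMpos.le
            _ ≤ (2*3^mm * ε^(N+j)) * (2*3^mm * ε^(N+j)) / ε^(2*j) :=
                div_le_div_of_nonneg_left (by positivity) (pow_pos hε0 _) hMlo
            _ = (2*3^mm)^2 * (ε^(2*N-1) * ε) := by
                have hpow : ε^(N+j) * ε^(N+j) = (ε^(2*N-1) * ε) * ε^(2*j) := by
                  rw [← pow_add, ← pow_succ, ← pow_add]
                  congr 1
                  omega
                have hz : ε^(2*j) ≠ 0 := (pow_pos hε0 _).ne'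
                rw [show 2*3^mm*ε^(N+j) * (2*3^mm*ε^(N+j))
                    = ((2*3^mm)^2 * (ε^(2*N-1) * ε)) * ε^(2*j) from by
                  rw [mul_mul_mul_comm, hpow]; ring]
                exact mul_div_cancel_right₀ _ hz
      calc ∑ j ∈ Finset.range N, TT P Y mm (N-mm) j * TT P Y mm (N-mm) j / MU P Y j
          ≤ ∑ _j ∈ Finset.range N, (2*3^mm)^2 * (ε^(2*N-1) * ε) := Finset.sum_le_sum hbound
        _ = (N:ℝ) * ((2*3^mm)^2 * (ε^(2*N-1) * ε)) := by
            rw [Finset.sum_const, Finset.card_range, nsmul_eq_mul]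
    calc ∑ j ∈ Finset.range N, TT P Y mm (N-mm) j * TT P Y mm (N-mm) j / MU P Y j
          + Q * Q / MU P Y N
        ≤ (N:ℝ) * ((2*3^mm)^2 * (ε^(2*N-1) * ε)) + ε^(2*N-1) * (1+ε)^2 :=
          add_le_add hrest htop
      _ = ε^(2*N-1) * ((1+ε)^2 + (N:ℝ) * (2*3^mm)^2 * ε) := by ring

end Chain

/-- Eq. (2.21): with `B_ε = {Y^{(ε)}_{-m} = Y^{(ε)}_m = N−m}` for `1 ≤ m < N/2`, one has
`P(B_ε) ~ ε^{2N−1}` as `ε → 0+`. -/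
theorem conditionS_P_B [MeasurableSpace Ω] (P : Measure Ω)
    [IsProbabilityMeasure P] (N : ℕ) (hN : 3 ≤ N) (m : ℕ) (hm1 : 1 ≤ m) (hm2 : 2 * m < N)
    (Y : ℝ → ℤ → Ω → ℝ)
    (hY : ∀ ε ∈ Set.Ioc (0:ℝ) (1/3), ConditionS P N ε (Y ε)) :
    Tendsto (fun ε : ℝ =>
        (P {ω | Y ε (-(m:ℤ)) ω = ((N - m : ℕ):ℝ) ∧ Y ε (m:ℤ) ω = ((N - m : ℕ):ℝ)}).toReal
          / ε^(2*N-1))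
      (𝓝[>] 0) (𝓝 1) := by
  have hmem : Set.Ioc (0:ℝ) (1/3) ∈ 𝓝[>] (0:ℝ) :=
    Ioc_mem_nhdsGT_of_mem (by constructor <;> norm_num)
  have hglim : Tendsto (fun ε : ℝ => ((1+ε)^(2*m))⁻¹) (𝓝[>] (0:ℝ)) (𝓝 1) := by
    have h1 : Tendsto (fun ε : ℝ => ((1+ε)^(2*m))⁻¹) (𝓝 (0:ℝ)) (𝓝 (((1+0)^(2*m))⁻¹)) := by
      apply Filter.Tendsto.inv₀
      · exact ((continuous_const.add continuous_id).pow (2*m)).tendsto 0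
      · norm_num
    have h1' : Tendsto (fun ε : ℝ => ((1+ε)^(2*m))⁻¹) (𝓝 (0:ℝ)) (𝓝 1) := by simpa using h1
    exact h1'.mono_left nhdsWithin_le_nhds
  have hhlim : Tendsto (fun ε : ℝ => (1+ε)^2 + (N:ℝ) * (2*3^m)^2 * ε) (𝓝[>] (0:ℝ)) (𝓝 1) := by
    have h1 : Tendsto (fun ε : ℝ => (1+ε)^2 + (N:ℝ) * (2*3^m)^2 * ε) (𝓝 (0:ℝ))
        (𝓝 ((1+0)^2 + (N:ℝ) * (2*3^m)^2 * 0)) := by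
      apply Filter.Tendsto.add
      · exact ((continuous_const.add continuous_id).pow 2).tendsto 0
      · exact (continuous_const.mul continuous_id).tendsto 0
    have h1' : Tendsto (fun ε : ℝ => (1+ε)^2 + (N:ℝ) * (2*3^m)^2 * ε) (𝓝 (0:ℝ)) (𝓝 1) := by
      simpa using h1
    exact h1'.mono_left nhdsWithin_le_nhds
  refine tendsto_of_tendsto_of_tendsto_of_le_of_le' hglim hhlim ?_ ?_
  · refine Filter.eventually_of_mem hmem fun ε hε => ?_
    obtain ⟨hk, _⟩ := key (hY ε hε) hN hε hm1 hm2
    have hppos : (0:ℝ) < ε^(2*N-1) := pow_pos hε.1 _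
    have hset : {ω | Y ε (-(m:ℤ)) ω = ((N - m : ℕ):ℝ) ∧ Y ε (m:ℤ) ω = ((N - m : ℕ):ℝ)}
        = Ev (Y ε) (-(m:ℤ)) ((N-m:ℕ):ℝ) ∩ Ev (Y ε) ((m:ℕ):ℤ) ((N-m:ℕ):ℝ) := rfl
    rw [hset, le_div_iff₀ hppos]
    calc ((1+ε)^(2*m))⁻¹ * ε^(2*N-1) = ε^(2*N-1) / (1+ε)^(2*m) := by ring
      _ ≤ _ := hk
  · refine Filter.eventually_of_mem hmem fun ε hε => ?_
    obtain ⟨_, hk⟩ := key (hY ε hε) hN hε hm1 hm2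
    have hppos : (0:ℝ) < ε^(2*N-1) := pow_pos hε.1 _
    have hset : {ω | Y ε (-(m:ℤ)) ω = ((N - m : ℕ):ℝ) ∧ Y ε (m:ℤ) ω = ((N - m : ℕ):ℝ)}
        = Ev (Y ε) (-(m:ℤ)) ((N-m:ℕ):ℝ) ∩ Ev (Y ε) ((m:ℕ):ℤ) ((N-m:ℕ):ℝ) := rfl
    rw [hset, div_le_iff₀ hppos]
    calc (P (Ev (Y ε) (-(m:ℤ)) ((N-m:ℕ):ℝ) ∩ Ev (Y ε) ((m:ℕ):ℤ) ((N-m:ℕ):ℝ))).toReal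
        ≤ ε^(2*N-1) * ((1+ε)^2 + (N:ℝ) * (2*3^m)^2 * ε) := hk
      _ = ((1+ε)^2 + (N:ℝ) * (2*3^m)^2 * ε) * ε^(2*N-1) := by ring

end
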